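/- Let A be an n×n matrix and K a proper cone such that the system ż = Az is strictly positive with respect to K (i.e., e^{At}(K \ {0}) ⊆ int(K) for t > 0). Then the dual system η̇ = Aᵀη is strictly positive with respect to the dual cone K*: e^{Aᵀt}(K* \ {0}) ⊆ int(K*) for t > 0. -/

import Mathlib

open Matrix

/-- A (convex) cone: closed under addition and nonnegative scaling. -/
def IsConvexCone {n : ℕ} (K : Set (Fin n → ℝ)) : Prop :=
  (∀ x ∈ K, ∀ y ∈ K, x + y ∈ K) ∧ (∀ x ∈ K, ∀ c : ℝ, 0 ≤ c → c • x ∈ K)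

/-- A proper cone: closed convex cone with nonempty interior, pointed. -/
def IsProperCone {n : ℕ} (K : Set (Fin n → ℝ)) : Prop :=
  IsConvexCone K ∧ IsClosed K ∧ (interior K).Nonempty ∧ ∀ x ∈ K, -x ∈ K → x = 0

/-- The dual cone. -/
def dualCone {n : ℕ} (K : Set (Fin n → ℝ)) : Set (Fin n → ℝ) :=
  {h | ∀ r ∈ K, 0 ≤ h ⬝ᵥ r}

lemma dot_self_pos {n : ℕ} {v : Fin n → ℝ} (h : v ≠ 0) : 0 < v ⬝ᵥ v := by
  have h0 : 0 ≤ v ⬝ᵥ v := Finset.sum_nonneg fun i _ => mul_self_nonneg _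
  rcases h0.lt_or_eq with h1 | h1
  · exact h1
  · exact absurd (dotProduct_self_eq_zero.mp h1.symm) h

/-- A nonzero dual vector is strictly positive on interior points. -/
lemma dual_pos_on_interior {n : ℕ} {K : Set (Fin n → ℝ)} {h y : Fin n → ℝ}
    (hh : h ∈ dualCone K) (hne : h ≠ 0) (hy : y ∈ interior K) : 0 < h ⬝ᵥ y := by
  obtain ⟨ε, hε, hball⟩ := Metric.isOpen_iff.mp isOpen_interior y hy
  set δ : ℝ := ε / (2 * (‖h‖ + 1)) with hδdef
  have hnorm : 0 < ‖h‖ + 1 := by positivity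
  have hδ : 0 < δ := by positivity
  have hmem : y - δ • h ∈ K := by
    apply interior_subset; apply hball
    rw [Metric.mem_ball, dist_eq_norm]
    have : y - δ • h - y = -(δ • h) := by abel
    rw [this, norm_neg, norm_smul, Real.norm_eq_abs, abs_of_pos hδ]
    have hle : ‖h‖ < ‖h‖ + 1 := by linarith
    calc δ * ‖h‖ ≤ δ * (‖h‖ + 1) := by nlinarith
      _ = ε / 2 := by rw [hδdef, div_mul_eq_mul_div, mul_div_mul_right _ _ hnorm.ne']
      _ < ε := by linarith
  have h1 : 0 ≤ h ⬝ᵥ (y - δ • h) := hh _ hmem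
  have h2 : h ⬝ᵥ (y - δ • h) = h ⬝ᵥ y - δ * (h ⬝ᵥ h) := by
    simp [dotProduct_sub, dotProduct_smul, smul_eq_mul]
  have h3 : 0 < h ⬝ᵥ h := dot_self_pos hne
  nlinarith

/-- If g is strictly positive on K \ {0}, then g is in the interior of K*. -/
lemma mem_interior_dualCone {n : ℕ} {K : Set (Fin n → ℝ)} (hKc : IsClosed K)
    (hcone : IsConvexCone K) {g : Fin n → ℝ}
    (hg : ∀ r ∈ K, r ≠ 0 → 0 < g ⬝ᵥ r) : g ∈ interior (dualCone K) := by
  by_cases htriv : ∀ r ∈ K, r = (0 : Fin n → ℝ)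
  · have : dualCone K = Set.univ := by
      ext h; simp only [dualCone, Set.mem_setOf_eq, Set.mem_univ, iff_true]
      intro r hr; rw [htriv r hr]; simp
    rw [this, interior_univ]; trivial
  · push_neg at htriv
    obtain ⟨r0, hr0K, hr0⟩ := htriv
    -- the unit-norm part of K is compact and nonempty
    set S : Set (Fin n → ℝ) := K ∩ Metric.sphere 0 1 with hSdef
    have hScomp : IsCompact S :=
      ((isCompact_sphere (0 : Fin n → ℝ) 1).inter_left hKc)
    have hSne : S.Nonempty := by
      refine ⟨‖r0‖⁻¹ • r0, hcone.2 r0 hr0K _ (by positivity), ?_⟩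
      simp only [Metric.mem_sphere, dist_zero_right, norm_smul, norm_inv, norm_norm]
      field_simp [norm_ne_zero_iff.mpr hr0]
    have hcont : Continuous fun r : Fin n → ℝ => g ⬝ᵥ r := by
      unfold dotProduct
      exact continuous_finset_sum _ fun i _ =>
        (continuous_const.mul (continuous_apply i))
    obtain ⟨rm, hrmS, hrm'⟩ := hScomp.exists_isMinOn hSne hcont.continuousOn
    have hrm : ∀ y ∈ S, g ⬝ᵥ rm ≤ g ⬝ᵥ y := fun y hy => hrm' hy
    set m : ℝ := g ⬝ᵥ rm with hmdef
    have hm : 0 < m := by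
      apply hg rm hrmS.1
      intro h0
      have := hrmS.2
      rw [h0] at this
      simp at this
    -- the ball of radius m/(n+1) around g is inside dualCone K
    have hball : Metric.ball g (m / (n + 1)) ⊆ dualCone K := by
      intro h' hh' r hrK
      by_cases hr : r = 0
      · simp [hr]
      · set u : Fin n → ℝ := ‖r‖⁻¹ • r with hudef
        have huK : u ∈ K := hcone.2 r hrK _ (by positivity)
        have hunorm : ‖u‖ = 1 := by
          rw [hudef, norm_smul, norm_inv, norm_norm]
          field_simp [norm_ne_zero_iff.mpr hr]
        have huS : u ∈ S := ⟨huK, by simp [Metric.mem_sphere, hunorm]⟩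
        have hmu : m ≤ g ⬝ᵥ u := hrm u huS
        have hdist : ‖h' - g‖ < m / (n + 1) := by
          rw [← dist_eq_norm]; exact hh'
        have hbd : |(h' - g) ⬝ᵥ u| ≤ n * ‖h' - g‖ := by
          calc |(h' - g) ⬝ᵥ u| ≤ ∑ i, |(h' - g) i * u i| := Finset.abs_sum_le_sum_abs _ _
            _ ≤ ∑ _i : Fin n, ‖h' - g‖ * 1 := by
                apply Finset.sum_le_sum
                intro i _
                rw [abs_mul]
                have h1 : |(h' - g) i| ≤ ‖h' - g‖ := by
                  have := norm_le_pi_norm (h' - g) i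
                  rwa [Real.norm_eq_abs] at this
                have h2 : |u i| ≤ 1 := by
                  have := norm_le_pi_norm u i
                  rwa [Real.norm_eq_abs, hunorm] at this
                exact mul_le_mul h1 h2 (abs_nonneg _) (norm_nonneg _)
            _ = n * ‖h' - g‖ := by simp [mul_comm]
        have hmul : ‖h' - g‖ * (n + 1) < m := by
          rw [lt_div_iff₀ (by positivity)] at hdist
          exact hdist
        have hnn : (0:ℝ) ≤ ‖h' - g‖ := norm_nonneg _
        have hlt : (n:ℝ) * ‖h' - g‖ < m := by nlinarith
        have hu_pos : 0 < h' ⬝ᵥ u := by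
          have hsplit : h' ⬝ᵥ u = g ⬝ᵥ u + (h' - g) ⬝ᵥ u := by
            rw [← add_dotProduct]; ring_nf
          have hlow : -((n:ℝ) * ‖h' - g‖) ≤ (h' - g) ⬝ᵥ u := neg_le_of_abs_le hbd
          nlinarith
        have hr_eq : h' ⬝ᵥ r = ‖r‖ * (h' ⬝ᵥ u) := by
          rw [hudef, dotProduct_smul, smul_eq_mul]
          field_simp [norm_ne_zero_iff.mpr hr]
        rw [hr_eq]
        positivity
    exact mem_interior.mpr ⟨_, hball, Metric.isOpen_ball,
      Metric.mem_ball_self (by positivity)⟩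

theorem stmt16 {n : ℕ} (A : Matrix (Fin n) (Fin n) ℝ) (K : Set (Fin n → ℝ))
    (hK : IsProperCone K)
    (hpos : ∀ t : ℝ, 0 < t → ∀ x ∈ K, x ≠ 0 →
      (NormedSpace.exp (t • A)) *ᵥ x ∈ interior K) :
    ∀ t : ℝ, 0 < t → ∀ h ∈ dualCone K, h ≠ 0 →
      (NormedSpace.exp (t • Aᵀ)) *ᵥ h ∈ interior (dualCone K) := by
  intro t ht h hh hne
  obtain ⟨hcone, hclosed, hint, hpointed⟩ := hK
  have hexp : NormedSpace.exp (t • Aᵀ) = (NormedSpace.exp (t • A))ᵀ := by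
    rw [← Matrix.transpose_smul, Matrix.exp_transpose]
  rw [hexp]
  apply mem_interior_dualCone hclosed hcone
  intro r hrK hr
  have hkey : ((NormedSpace.exp (t • A))ᵀ *ᵥ h) ⬝ᵥ r
      = h ⬝ᵥ (NormedSpace.exp (t • A) *ᵥ r) := by
    rw [Matrix.mulVec_transpose, ← Matrix.dotProduct_mulVec]
  rw [hkey]
  exact dual_pos_on_interior hh hne (hpos t ht r hrK hr)
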